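/- arXiv:1706.05942 — 6 statements merged into one kernel-verified Lean document; each statement's English description precedes it below -/
import Mathlib

section
/- Let K be an uncountable algebraically closed field and let (C_N)_{N≥N_0} be a decreasing sequence of nonempty constructible subsets of affine space K^d (i.e., C_{N+1} ⊆ C_N, each C_N is a finite union of locally closed sets in the Zariski topology, and each C_N ≠ ∅). Then the intersection ⋂_{N} C_N is nonempty. -/
set_option maxHeartbeats 1600000
set_option synthInstance.maxHeartbeats 400000

/-- Zariski closed subsets of affine `d`-space. -/
def ZariskiClosed {K : Type*} [CommSemiring K] {d : ℕ} (V : Set (Fin d → K)) : Prop :=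
  ∃ S : Set (MvPolynomial (Fin d) K), V = {x | ∀ p ∈ S, MvPolynomial.eval x p = 0}

/-- Constructible subsets: finite unions of differences of Zariski closed sets. -/
def ZConstructible {K : Type*} [CommSemiring K] {d : ℕ} (C : Set (Fin d → K)) : Prop :=
  ∃ (r : ℕ) (W V : Fin r → Set (Fin d → K)),
    (∀ i, ZariskiClosed (W i) ∧ ZariskiClosed (V i)) ∧ C = ⋃ i, W i \ V i

noncomputable section
namespace ZCP
open MvPolynomial Ideal

variable {K : Type*} [Field K]

lemma exists_forall_polyEval_ne_zero [Uncountable K] {ι : Type*} [Countable ι]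
    (p : ι → Polynomial K) (hp : ∀ i, p i ≠ 0) :
    ∃ y : K, ∀ i, Polynomial.eval y (p i) ≠ 0 := by
  have h : (⋃ i, {y : K | (p i).IsRoot y}).Countable :=
    Set.countable_iUnion fun i => (Polynomial.finite_setOf_isRoot (hp i)).countable
  have hne : (⋃ i, {y : K | (p i).IsRoot y}) ≠ Set.univ := fun e => Set.not_countable_univ (e ▸ h)
  obtain ⟨y, hy⟩ := (Set.ne_univ_iff_exists_notMem _).1 hne
  exact ⟨y, fun i hi => hy (Set.mem_iUnion.2 ⟨i, hi⟩)⟩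

lemma exists_point_of_prime [IsAlgClosed K] [Uncountable K] :
    ∀ (d : ℕ) (ι : Type) [Countable ι] (P : Ideal (MvPolynomial (Fin d) K)) (_ : P.IsPrime)
      (a : ι → MvPolynomial (Fin d) K) (_ : ∀ i, a i ∉ P),
      ∃ x ∈ zeroLocus K P, ∀ i, eval x (a i) ≠ 0 := by
  intro d
  induction d with
  | zero =>
    intro ι _ P hP a ha
    refine ⟨fun i => i.elim0, ?_, ?_⟩
    · intro p hp
      obtain ⟨c, rfl⟩ := MvPolynomial.C_surjective (Fin 0) p
      by_contra hc
      have hc0 : c ≠ 0 := fun h => hc (by simp [h])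
      have : (1 : MvPolynomial (Fin 0) K) ∈ P := by
        have := Ideal.mul_mem_left P (MvPolynomial.C c⁻¹) hp
        rwa [← MvPolynomial.C_mul, inv_mul_cancel₀ hc0, MvPolynomial.C_1] at this
      exact hP.ne_top (Ideal.eq_top_iff_one P |>.2 this)
    · intro i
      obtain ⟨c, hc⟩ := MvPolynomial.C_surjective (Fin 0) (a i)
      have hc0 : c ≠ 0 := by
        rintro rfl
        exact ha i (hc ▸ (by simp : MvPolynomial.C (0:K) = 0) ▸ P.zero_mem)
      rw [← hc]
      simpa using hc0
  | succ d ih =>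
    intro ι _ P hP a ha
    classical
    set R' := MvPolynomial (Fin d) K with hR'
    let ε : MvPolynomial (Fin (d+1)) K ≃+* Polynomial R' := (finSuccEquiv K d).toRingEquiv
    let Pt : Ideal (Polynomial R') := P.comap (ε.symm : Polynomial R' →+* MvPolynomial (Fin (d+1)) K)
    haveI hPt : Pt.IsPrime := hP.comap _
    have hmem_Pt : ∀ g, ε g ∈ Pt ↔ g ∈ P := by
      intro g
      rw [Ideal.mem_comap]
      simp
    -- the contracted prime
    let P' : Ideal R' := Pt.comap (Polynomial.C : R' →+* Polynomial R')
    haveI hP' : P'.IsPrime := hPt.comap _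
    have hmem_P' : ∀ c : R', c ∈ P' ↔ Polynomial.C c ∈ Pt := fun c => Iff.rfl
    -- quotient world
    let D := R' ⧸ P'
    let mk : R' →+* D := Ideal.Quotient.mk P'
    have hmk_surj : Function.Surjective mk := Ideal.Quotient.mk_surjective
    let π : Polynomial R' →+* Polynomial D := Polynomial.mapRingHom mk
    have hπ_surj : Function.Surjective π := Polynomial.map_surjective _ hmk_surj
    have hker : RingHom.ker π ≤ Pt := by
      intro f hf
      have hcoeff : ∀ k, f.coeff k ∈ P' := by
        intro k
        have : (Polynomial.map mk f).coeff k = 0 := by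
          rw [show Polynomial.map mk f = 0 from hf]; simp
        rw [Polynomial.coeff_map] at this
        exact Ideal.Quotient.eq_zero_iff_mem.1 this
      have hf_eq : f = ∑ k ∈ f.support, Polynomial.C (f.coeff k) * Polynomial.X ^ k := by
        conv_lhs => rw [← Polynomial.sum_C_mul_X_pow_eq f]
        rfl
      rw [hf_eq]
      exact Ideal.sum_mem _ fun k _ =>
        Ideal.mul_mem_right _ _ ((hmem_P' _).1 (hcoeff k))
    let Pb : Ideal (Polynomial D) := Pt.map π
    haveI hPb : Pb.IsPrime := Ideal.map_isPrime_of_surjective hπ_surj hker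
    have hmem_Pb : ∀ f, π f ∈ Pb ↔ f ∈ Pt := by
      intro f
      constructor
      · intro hf
        obtain ⟨g, hg, hgf⟩ := (Ideal.mem_map_iff_of_surjective π hπ_surj).1 hf
        have : f - g ∈ RingHom.ker π := by
          simp [RingHom.mem_ker, map_sub, hgf]
        have := Pt.add_mem (hker this) hg
        simpa using this
      · exact fun hf => Ideal.mem_map_of_mem π hf
    have hconst : ∀ u : D, Polynomial.C u ∈ Pb → u = 0 := by
      intro u hu
      obtain ⟨c, rfl⟩ := hmk_surj u
      have : π (Polynomial.C c) ∈ Pb := by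
        simpa [π, Polynomial.map_C] using hu
      rw [hmem_Pb] at this
      exact Ideal.Quotient.eq_zero_iff_mem.2 ((hmem_P' c).2 this)
    -- evaluation bridge
    have hbridge : ∀ (z : Fin d → K) (hz : ∀ p ∈ P', eval z p = 0) (y : K)
        (g : MvPolynomial (Fin (d+1)) K),
        eval (Fin.cons y z) g =
          Polynomial.eval y (Polynomial.map (Ideal.Quotient.lift P' (eval z) hz) (π (ε g))) := by
      intro z hz y g
      have h1 : eval (Fin.cons y z) g =
          Polynomial.eval y (Polynomial.map (eval z) (finSuccEquiv K d g)) :=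
        eval_eq_eval_mv_eval' z y g
      rw [h1]
      congr 1
      have hπ : π (ε g) = Polynomial.map mk (ε g) := rfl
      rw [hπ, Polynomial.map_map]
      congr 1
    by_cases hPbbot : Pb = ⊥
    · -- extended case : P is generated by polynomials in the first d variables
      have hcoeffs : ∀ i, ∃ k, (ε (a i)).coeff k ∉ P' := by
        intro i
        by_contra h
        push_neg at h
        have : π (ε (a i)) = 0 := by
          ext k
          simp only [π, Polynomial.coe_mapRingHom, Polynomial.coeff_map, Polynomial.coeff_zero]
          exact Ideal.Quotient.eq_zero_iff_mem.2 (h k)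
        have : ε (a i) ∈ Pt := hker (by simpa [RingHom.mem_ker] using this)
        exact ha i ((hmem_Pt _).1 this)
      choose k hk using hcoeffs
      obtain ⟨z, hz, hz2⟩ := ih ι P' hP' (fun i => (ε (a i)).coeff (k i)) hk
      have hz' : ∀ p ∈ P', eval z p = 0 := fun p hp => hz p hp
      have hA : ∀ i, Polynomial.map (eval z) (ε (a i)) ≠ 0 := by
        intro i h
        apply hz2 i
        have := congrArg (fun q => Polynomial.coeff q (k i)) h
        simpa [Polynomial.coeff_map] using this
      obtain ⟨y, hy⟩ := exists_forall_polyEval_ne_zero (fun i => Polynomial.map (eval z) (ε (a i))) hA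
      refine ⟨Fin.cons y z, ?_, ?_⟩
      · intro p hp
        rw [MvPolynomial.aeval_eq_eval]
        rw [hbridge z hz' y p]
        have : π (ε p) ∈ Pb := (hmem_Pb _).2 ((hmem_Pt _).2 hp)
        rw [hPbbot] at this
        rw [Ideal.mem_bot.1 this]
        simp
      · intro i
        have h1 : eval (Fin.cons y z) (a i) =
            Polynomial.eval y (Polynomial.map (eval z) (finSuccEquiv K d (a i))) :=
          eval_eq_eval_mv_eval' z y (a i)
        rw [h1]
        exact hy i
    · -- Pb ≠ ⊥ : the algebraic fiber case
      haveI hDdom : IsDomain D := inferInstanceAs (IsDomain (R' ⧸ P'))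
      haveI hDnoeth : IsNoetherianRing D := inferInstanceAs (IsNoetherianRing (R' ⧸ P'))
      obtain ⟨f0, hf0mem, hf00⟩ := (Submodule.ne_bot_iff _).1 hPbbot
      set S := {m : ℕ | ∃ f ∈ Pb, f ≠ 0 ∧ f.natDegree = m} with hS
      have hSne : S.Nonempty := ⟨f0.natDegree, f0, hf0mem, hf00, rfl⟩
      obtain ⟨G, hGmem, hG0, hGdeg⟩ := Nat.sInf_mem hSne
      set n := sInf S with hn
      have hmin : ∀ f ∈ Pb, f ≠ 0 → n ≤ f.natDegree :=
        fun f hf h0 => Nat.sInf_le ⟨f, hf, h0, rfl⟩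
      have hnpos : 0 < n := by
        rcases Nat.eq_zero_or_pos n with h | h
        · exfalso
          have hdeg0 : G.natDegree = 0 := by omega
          obtain ⟨c, hc⟩ := Polynomial.natDegree_eq_zero.1 hdeg0
          have hc0 : c = 0 := hconst c (hc ▸ hGmem)
          exact hG0 (by rw [← hc, hc0, map_zero])
        · exact h
      -- fraction field of D
      let K' := FractionRing D
      let ψ : D →+* K' := algebraMap D K'
      have hψinj : Function.Injective ψ := IsFractionRing.injective D K'
      let φ : Polynomial D →+* Polynomial K' := Polynomial.mapRingHom ψ
      have hφinj : Function.Injective φ := Polynomial.map_injective _ hψinj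
      have hφC : ∀ b : D, φ (Polynomial.C b) = Polynomial.C (ψ b) := fun b => Polynomial.map_C ψ
      have hψne : ∀ {b : D}, b ≠ 0 → ψ b ≠ 0 := fun hb h => hb (hψinj (by simpa using h))
      have hclear : ∀ q : Polynomial K', ∃ (b : D) (Q : Polynomial D), b ≠ 0 ∧
          φ Q = Polynomial.C (ψ b) * q := by
        intro q
        obtain ⟨b, hb⟩ :=
          IsLocalization.integerNormalization_map_to_map (nonZeroDivisors D) q
        refine ⟨(b : D), IsLocalization.integerNormalization (nonZeroDivisors D) q,
          nonZeroDivisors.coe_ne_zero b, ?_⟩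
        show Polynomial.map ψ _ = _
        rw [hb, Algebra.smul_def, Polynomial.algebraMap_apply]
      have hg'0 : φ G ≠ 0 := fun h => hG0 (hφinj (by simpa using h))
      have hdegφ : (φ G).natDegree = n := by
        rw [show φ G = Polynomial.map ψ G from rfl,
          Polynomial.natDegree_map_eq_of_injective hψinj, hGdeg]
      have hirr : Irreducible (φ G) := by
        constructor
        · exact Polynomial.not_isUnit_of_natDegree_pos _ (by omega)
        · intro s t hst
          have hst0 : s * t ≠ 0 := hst ▸ hg'0
          have hs0 : s ≠ 0 := fun h => hst0 (by rw [h, zero_mul])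
          have ht0 : t ≠ 0 := fun h => hst0 (by rw [h, mul_zero])
          obtain ⟨bs, Qs, hbs, hQs⟩ := hclear s
          obtain ⟨bt, Qt, hbt, hQt⟩ := hclear t
          have hkey : Qs * Qt = Polynomial.C (bs * bt) * G := by
            apply hφinj
            rw [_root_.map_mul, hQs, hQt, _root_.map_mul, hφC, _root_.map_mul, Polynomial.C_mul, hst]
            ring
          have hmemst : Qs * Qt ∈ Pb := hkey ▸ Ideal.mul_mem_left _ _ hGmem
          have hQs0 : Qs ≠ 0 := by
            intro h
            apply mul_ne_zero (Polynomial.C_ne_zero.2 (hψne hbs)) hs0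
            rw [← hQs, h, map_zero]
          have hQt0 : Qt ≠ 0 := by
            intro h
            apply mul_ne_zero (Polynomial.C_ne_zero.2 (hψne hbt)) ht0
            rw [← hQt, h, map_zero]
          have hdegQs : Qs.natDegree = s.natDegree := by
            have h1 : (φ Qs).natDegree = Qs.natDegree :=
              Polynomial.natDegree_map_eq_of_injective hψinj Qs
            rw [← h1, hQs, Polynomial.natDegree_C_mul (hψne hbs)]
          have hdegQt : Qt.natDegree = t.natDegree := by
            have h1 : (φ Qt).natDegree = Qt.natDegree :=
              Polynomial.natDegree_map_eq_of_injective hψinj Qt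
            rw [← h1, hQt, Polynomial.natDegree_C_mul (hψne hbt)]
          have hsum : s.natDegree + t.natDegree = n := by
            rw [← Polynomial.natDegree_mul hs0 ht0, ← hst, hdegφ]
          rcases hPb.mem_or_mem hmemst with hmem | hmem
          · have h2 : n ≤ s.natDegree := hdegQs ▸ hmin _ hmem hQs0
            have h3 : t.natDegree = 0 := by omega
            right
            obtain ⟨c, hc⟩ := Polynomial.natDegree_eq_zero.1 h3
            have hcne : c ≠ 0 := fun h => ht0 (by rw [← hc, h, map_zero])
            exact hc ▸ Polynomial.isUnit_C.2 (isUnit_iff_ne_zero.2 hcne)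
          · have h2 : n ≤ t.natDegree := hdegQt ▸ hmin _ hmem hQt0
            have h3 : s.natDegree = 0 := by omega
            left
            obtain ⟨c, hc⟩ := Polynomial.natDegree_eq_zero.1 h3
            have hcne : c ≠ 0 := fun h => hs0 (by rw [← hc, h, map_zero])
            exact hc ▸ Polynomial.isUnit_C.2 (isUnit_iff_ne_zero.2 hcne)
      -- every member of Pb is divisible by G after clearing a denominator
      have hdvd : ∀ f ∈ Pb, ∃ (b : D) (Q : Polynomial D), b ≠ 0 ∧
          Polynomial.C b * f = G * Q := by
        intro f hf
        have hnd : φ G ∣ φ f := by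
          by_contra hnd
          obtain ⟨u, v, huv⟩ := (hirr.coprime_iff_not_dvd.2 hnd)
          obtain ⟨bu, U, hbu, hU⟩ := hclear u
          obtain ⟨bv, V, hbv, hV⟩ := hclear v
          have hkey : Polynomial.C bv * U * G + Polynomial.C bu * V * f
              = Polynomial.C (bu * bv) := by
            apply hφinj
            rw [_root_.map_add, _root_.map_mul, _root_.map_mul, _root_.map_mul, _root_.map_mul, hU, hV, hφC, hφC, hφC,
              _root_.map_mul ψ bu bv, Polynomial.C_mul]
            calc Polynomial.C (ψ bv) * (Polynomial.C (ψ bu) * u) * φ G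
                + Polynomial.C (ψ bu) * (Polynomial.C (ψ bv) * v) * φ f
                = Polynomial.C (ψ bu) * Polynomial.C (ψ bv) * (u * φ G + v * φ f) := by ring
              _ = Polynomial.C (ψ bu) * Polynomial.C (ψ bv) := by rw [huv, mul_one]
          have hmemc : Polynomial.C (bu * bv) ∈ Pb := by
            rw [← hkey]
            exact Ideal.add_mem _ (Ideal.mul_mem_left _ _ hGmem) (Ideal.mul_mem_left _ _ hf)
          exact mul_ne_zero hbu hbv (hconst _ hmemc)
        obtain ⟨q, hq⟩ := hnd
        obtain ⟨b, Q, hb, hQ⟩ := hclear q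
        refine ⟨b, Q, hb, hφinj ?_⟩
        rw [_root_.map_mul, _root_.map_mul, hφC, hQ, hq]
        ring
      -- finitely many generators of Pb
      obtain ⟨ng, gens, hgens⟩ :=
        Submodule.fg_iff_exists_fin_generating_family.1 (IsNoetherian.noetherian Pb)
      have hgen_data : ∀ j : Fin ng, ∃ (b : D) (Q : Polynomial D), b ≠ 0 ∧
          Polynomial.C b * gens j = G * Q := by
        intro j
        exact hdvd _ (hgens ▸ Submodule.subset_span ⟨j, rfl⟩)
      choose bg Qg hbg hQg using hgen_data
      -- Bezout identities for the a i
      have habar : ∀ i, π (ε (a i)) ∉ Pb := fun i h => ha i ((hmem_Pt _).1 ((hmem_Pb _).1 h))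
      have hbez : ∀ i, ∃ (w : D) (U V : Polynomial D), w ≠ 0 ∧
          U * G + V * (π (ε (a i))) = Polynomial.C w := by
        intro i
        have hnd : ¬ φ G ∣ φ (π (ε (a i))) := by
          rintro ⟨q, hq⟩
          obtain ⟨b, Q, hb, hQ⟩ := hclear q
          have hkey : Polynomial.C b * π (ε (a i)) = G * Q := by
            apply hφinj
            rw [_root_.map_mul, _root_.map_mul, hφC, hQ, hq]
            ring
          have hmemb : Polynomial.C b * π (ε (a i)) ∈ Pb :=
            by rw [hkey, @mul_comm _ (@Polynomial.commSemiring D (Ideal.Quotient.commRing P').toCommSemiring).toCommMonoid.toCommMagma G Q]; exact Ideal.mul_mem_left Pb Q hGmem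
          rcases hPb.mem_or_mem hmemb with h | h
          · exact hb (hconst _ h)
          · exact habar i h
        obtain ⟨u, v, huv⟩ := hirr.coprime_iff_not_dvd.2 hnd
        obtain ⟨bu, U, hbu, hU⟩ := hclear u
        obtain ⟨bv, V, hbv, hV⟩ := hclear v
        refine ⟨bu * bv, Polynomial.C bv * U, Polynomial.C bu * V,
          mul_ne_zero hbu hbv, hφinj ?_⟩
        rw [_root_.map_add, _root_.map_mul, _root_.map_mul, _root_.map_mul, _root_.map_mul, hU, hV, hφC, hφC, hφC,
          _root_.map_mul ψ bu bv, Polynomial.C_mul]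
        calc Polynomial.C (ψ bv) * (Polynomial.C (ψ bu) * u) * φ G
            + Polynomial.C (ψ bu) * (Polynomial.C (ψ bv) * v) * φ (π (ε (a i)))
            = Polynomial.C (ψ bu) * Polynomial.C (ψ bv)
              * (u * φ G + v * φ (π (ε (a i)))) := by ring
          _ = Polynomial.C (ψ bu) * Polynomial.C (ψ bv) := by rw [huv, mul_one]
      choose w U V hw hbezid using hbez
      -- lifts to R' and the inductive call
      obtain ⟨L, hL⟩ := hmk_surj G.leadingCoeff
      choose Wl hWl using fun i => hmk_surj (w i)
      choose Bl hBl using fun j => hmk_surj (bg j)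
      have hnotP' : ∀ (c : R') (u : D), mk c = u → u ≠ 0 → c ∉ P' := by
        intro c u hcu hu hc
        exact hu (hcu ▸ Ideal.Quotient.eq_zero_iff_mem.2 hc)
      have hlead0 : G.leadingCoeff ≠ 0 := Polynomial.leadingCoeff_ne_zero.2 hG0
      let ι' := Option (ι ⊕ Fin ng)
      let cond : ι' → R' := fun i' => match i' with
        | none => L
        | some (Sum.inl i) => Wl i
        | some (Sum.inr j) => Bl j
      have hcond : ∀ i', cond i' ∉ P' := by
        rintro (_ | i | j)
        · exact hnotP' _ _ hL hlead0
        · exact hnotP' _ _ (hWl _) (hw _)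
        · exact hnotP' _ _ (hBl _) (hbg _)
      obtain ⟨z, hz, hzc⟩ := ih ι' P' hP' cond hcond
      have hz' : ∀ p ∈ P', eval z p = 0 := fun p hp => hz p hp
      let evb : D →+* K := Ideal.Quotient.lift P' (eval z) hz'
      have hevb : ∀ c : R', evb (mk c) = eval z c := fun c => rfl
      have hevbL : evb G.leadingCoeff ≠ 0 := by
        rw [← hL, hevb]; exact hzc none
      have hevbw : ∀ i, evb (w i) ≠ 0 := fun i => by
        rw [← hWl i, hevb]; exact hzc (some (Sum.inl i))
      have hevbb : ∀ j, evb (bg j) ≠ 0 := fun j => by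
        rw [← hBl j, hevb]; exact hzc (some (Sum.inr j))
      let Ψ : Polynomial D →+* Polynomial K := Polynomial.mapRingHom evb
      have hΨGcoeff : (Ψ G).coeff n ≠ 0 := by
        show (Polynomial.map evb G).coeff n ≠ 0
        rw [Polynomial.coeff_map, ← hGdeg]
        exact hevbL
      have hdegΨ : (Ψ G).degree ≠ 0 := by
        intro h
        have h1 : n ≤ (Ψ G).natDegree := Polynomial.le_natDegree_of_ne_zero hΨGcoeff
        have h2 : (Ψ G).natDegree = 0 :=
          Polynomial.natDegree_eq_zero_iff_degree_le_zero.2 (le_of_eq h)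
        omega
      obtain ⟨y, hy⟩ := IsAlgClosed.exists_root (Ψ G) hdegΨ
      let ev2 : Polynomial D →+* K := (Polynomial.evalRingHom y).comp Ψ
      have hev2C : ∀ b : D, ev2 (Polynomial.C b) = evb b := by
        intro b
        simp [ev2, Ψ]
      have hev2G : ev2 G = 0 := by
        show Polynomial.eval y (Polynomial.map evb G) = 0
        exact hy
      have hPbker : ∀ f ∈ Pb, ev2 f = 0 := by
        intro f hf
        have hle : Pb ≤ RingHom.ker ev2 := by
          rw [← hgens, Submodule.span_le]
          rintro _ ⟨j, rfl⟩
          have h1 := congrArg ev2 (hQg j)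
          rw [_root_.map_mul, _root_.map_mul, hev2C, hev2G, zero_mul] at h1
          exact (mul_eq_zero.1 h1).resolve_left (hevbb j)
        exact hle hf
      have hbridge2 : ∀ g, eval (Fin.cons y z) g = ev2 (π (ε g)) := by
        intro g
        rw [hbridge z hz' y g]
        rfl
      refine ⟨Fin.cons y z, ?_, ?_⟩
      · intro p hp
        rw [MvPolynomial.aeval_eq_eval]
        rw [hbridge2 p]
        exact hPbker _ ((hmem_Pb _).2 ((hmem_Pt _).2 hp))
      · intro i
        rw [hbridge2 (a i)]
        intro h0
        have h1 := congrArg ev2 (hbezid i)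
        rw [_root_.map_add, _root_.map_mul, _root_.map_mul, hev2G, mul_zero, h0, mul_zero, add_zero,
          hev2C] at h1
        exact hevbw i h1.symm




variable {K : Type*} [Field K] {d : ℕ}

lemma zeroLocus_span (S : Set (MvPolynomial (Fin d) K)) :
    zeroLocus K (Ideal.span S) = {x | ∀ p ∈ S, eval x p = 0} := by
  ext x
  simp only [mem_zeroLocus_iff, Set.mem_setOf_eq]
  constructor
  · exact fun h p hp => h p (Ideal.subset_span hp)
  · intro h p hp
    refine Submodule.span_induction (fun q hq => h q hq) (by simp) ?_ ?_ hp
    · intro q q' _ _ h1 h2; rw [map_add, h1, h2, add_zero]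
    · intro c q _ h1
      rw [smul_eq_mul, _root_.map_mul, h1, mul_zero]

lemma zariskiClosed_iff {V : Set (Fin d → K)} :
    ZariskiClosed V ↔ ∃ I : Ideal (MvPolynomial (Fin d) K), V = zeroLocus K I := by
  constructor
  · rintro ⟨S, rfl⟩; exact ⟨Ideal.span S, (zeroLocus_span S).symm⟩
  · rintro ⟨I, rfl⟩; exact ⟨I, rfl⟩

lemma radical_vanishingIdeal (V : Set (Fin d → K)) :
    (vanishingIdeal K V).radical = vanishingIdeal K V := by
  refine le_antisymm ?_ Ideal.le_radical
  intro f hf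
  obtain ⟨m, hm⟩ := hf
  rw [mem_vanishingIdeal_iff] at hm ⊢
  intro x hx
  have h2 := hm x hx
  rw [map_pow] at h2
  exact pow_eq_zero_iff'.mp h2 |>.1

lemma colon_eq_self_of_prime {R : Type*} [CommRing R] {q A : Ideal R} (hq : q.IsPrime)
    (hA : ¬ A ≤ q) : q.colon A = q := by
  obtain ⟨a, haA, haq⟩ := Set.not_subset.1 hA
  refine le_antisymm ?_ fun f hf => Submodule.mem_colon.2 fun p hp => by
    rw [smul_eq_mul]; exact Ideal.mul_mem_right _ _ hf
  intro f hf
  have := Submodule.mem_colon.1 hf a haA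
  rw [smul_eq_mul] at this
  exact (hq.mem_or_mem this).resolve_right haq

lemma colon_top {R : Type*} [CommRing R] {q A : Ideal R} (hA : A ≤ q) : q.colon A = ⊤ := by
  rw [eq_top_iff]
  intro f _
  exact Submodule.mem_colon.2 fun p hp => by
    rw [smul_eq_mul]; exact Ideal.mul_mem_left _ _ (hA hp)

lemma not_le_of_minimalPrime_colon {R : Type*} [CommRing R] [IsNoetherianRing R]
    {B A P : Ideal R} (hrad : B.radical = B) (hP : P ∈ (B.colon A).minimalPrimes) :
    ¬ A ≤ P := by
  intro hA
  haveI hPp : P.IsPrime := hP.1.1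
  have hMfin : B.minimalPrimes.Finite := by
    rw [Ideal.minimalPrimes_eq_comap]
    exact (minimalPrimes.finite_of_isNoetherianRing _).image _
  set Ft := hMfin.toFinset with hFt
  have hBinf : ∀ f : R, f ∈ B ↔ ∀ q ∈ Ft, f ∈ q := by
    intro f
    have h1 : sInf B.minimalPrimes = B := by rw [Ideal.sInf_minimalPrimes, hrad]
    constructor
    · intro hf q hq
      rw [hFt, Set.Finite.mem_toFinset] at hq
      rw [← h1] at hf
      exact (Ideal.mem_sInf.1 hf) hq
    · intro hf
      rw [← h1, Ideal.mem_sInf]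
      intro q hq
      exact hf q (hMfin.mem_toFinset.2 hq)
  have hinf_le : Ft.inf (fun q => q.colon A) ≤ P := by
    refine le_trans ?_ hP.1.2
    intro f hf
    rw [Submodule.mem_finsetInf] at hf
    refine Submodule.mem_colon.2 fun p hp => ?_
    rw [hBinf]
    intro q hq
    exact Submodule.mem_colon.1 (hf q hq) p hp
  obtain ⟨q, hqFt, hqP⟩ := hPp.inf_le'.1 hinf_le
  have hqmin : q ∈ B.minimalPrimes := hMfin.mem_toFinset.1 hqFt
  haveI hqprime : q.IsPrime := hqmin.1.1
  by_cases hAq : A ≤ q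
  · rw [colon_top hAq] at hqP
    exact hPp.ne_top (top_le_iff.1 hqP)
  · rw [colon_eq_self_of_prime hqprime hAq] at hqP
    have hcolon_le : B.colon A ≤ q := by
      intro f hf
      rw [← colon_eq_self_of_prime hqprime hAq]
      exact Submodule.mem_colon.2 fun p hp =>
        hqmin.1.2 (Submodule.mem_colon.1 hf p hp)
    have hPq : P ≤ q := hP.2 ⟨hqprime, hcolon_le⟩ hqP
    exact hAq (hA.trans hPq)

lemma vanishingIdeal_diff_eq_colon (W : Set (Fin d → K)) (A : Ideal (MvPolynomial (Fin d) K)) :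
    vanishingIdeal K (W \ zeroLocus K A) = (vanishingIdeal K W).colon A := by
  ext f
  rw [mem_vanishingIdeal_iff, Submodule.mem_colon]
  constructor
  · intro h p hp
    rw [smul_eq_mul, mem_vanishingIdeal_iff]
    intro x hxW
    rw [_root_.map_mul]
    by_cases hxA : x ∈ zeroLocus K A
    · rw [hxA p hp, mul_zero]
    · rw [h x ⟨hxW, hxA⟩, zero_mul]
  · rintro h x ⟨hxW, hxA⟩
    rw [mem_zeroLocus_iff] at hxA
    push_neg at hxA
    obtain ⟨p, hpA, hpx⟩ := hxA
    have := h p hpA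
    rw [smul_eq_mul, mem_vanishingIdeal_iff] at this
    have h2 := this x hxW
    rw [_root_.map_mul] at h2
    rcases mul_eq_zero.1 h2 with h3 | h3
    · exact h3
    · exact absurd h3 hpx

lemma vanishingIdeal_iUnion {r : ℕ} (T : Fin r → Set (Fin d → K)) :
    vanishingIdeal K (⋃ i, T i) = ⨅ i, vanishingIdeal K (T i) := by
  ext f
  simp only [mem_vanishingIdeal_iff, Ideal.mem_iInf, Set.mem_iUnion]
  aesop

lemma zeroLocus_vanishingIdeal_zeroLocus (B : Ideal (MvPolynomial (Fin d) K)) :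
    zeroLocus K (vanishingIdeal K (zeroLocus K B)) = zeroLocus K B :=
  le_antisymm (zeroLocus_anti_mono (le_vanishingIdeal_zeroLocus B))
    (zeroLocus_vanishingIdeal_le _)


lemma key_step (Cs : Set (Fin d → K)) (hcon : ZConstructible Cs)
    (P : Ideal (MvPolynomial (Fin d) K)) (hP : P ∈ (vanishingIdeal K Cs).minimalPrimes) :
    ∃ a, a ∉ P ∧ ∀ x ∈ zeroLocus K P, eval x a ≠ 0 → x ∈ Cs := by
  obtain ⟨r, W, V, hWV, hC⟩ := hcon
  haveI hPp : P.IsPrime := hP.1.1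
  set I : Fin r → Ideal (MvPolynomial (Fin d) K) := fun i => vanishingIdeal K (W i \ V i) with hI
  have hJ : vanishingIdeal K Cs = ⨅ i, I i := by rw [hC, vanishingIdeal_iUnion]
  have hinf : Finset.univ.inf I ≤ P := by
    refine le_trans ?_ hP.1.2
    rw [hJ]
    intro f hf
    rw [Submodule.mem_finsetInf] at hf
    rw [Ideal.mem_iInf]
    exact fun i => hf i (Finset.mem_univ i)
  obtain ⟨i, _, hiP⟩ := hPp.inf_le'.1 hinf
  -- the i-th piece
  obtain ⟨IB, hIB⟩ := zariskiClosed_iff.1 (hWV i).1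
  obtain ⟨IA, hIA⟩ := zariskiClosed_iff.1 (hWV i).2
  have hIi : I i = (vanishingIdeal K (W i)).colon IA := by
    rw [hI]
    show vanishingIdeal K (W i \ V i) = _
    rw [hIA, vanishingIdeal_diff_eq_colon]
  -- P is a minimal prime over I i
  have hPI : P ∈ (I i).minimalPrimes := by
    constructor
    · exact ⟨hPp, hiP⟩
    · rintro q ⟨hq1, hq2⟩ hqP
      refine hP.2 ⟨hq1, ?_⟩ hqP
      rw [hJ]
      exact le_trans (iInf_le _ i) hq2
  have hrad : (vanishingIdeal K (W i)).radical = vanishingIdeal K (W i) :=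
    radical_vanishingIdeal _
  have hnle : ¬ IA ≤ P :=
    not_le_of_minimalPrime_colon hrad (hIi ▸ hPI)
  obtain ⟨a, haA, haP⟩ := Set.not_subset.1 hnle
  refine ⟨a, haP, ?_⟩
  intro x hxP hxa
  have hWle : vanishingIdeal K (W i) ≤ P := by
    rw [hIi] at hiP
    refine le_trans ?_ hiP
    intro f hf
    exact Submodule.mem_colon.2 fun p hp => by
      rw [smul_eq_mul]; exact Ideal.mul_mem_right _ _ hf
  have hxW : x ∈ W i := by
    have h1 : x ∈ zeroLocus K (vanishingIdeal K (W i)) :=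
      zeroLocus_anti_mono hWle hxP
    rw [hIB] at h1 ⊢
    rwa [zeroLocus_vanishingIdeal_zeroLocus] at h1
  have hxV : x ∉ V i := by
    rw [hIA, mem_zeroLocus_iff]
    push_neg
    exact ⟨a, haA, hxa⟩
  rw [hC]
  exact Set.mem_iUnion.2 ⟨i, hxW, hxV⟩


end ZCP
end

/-- Over an uncountable algebraically closed field, a decreasing sequence of
nonempty constructible subsets of affine space has nonempty intersection. -/
theorem iInter_nonempty_of_decreasing_constructible
    (K : Type*) [Field K] [IsAlgClosed K] [Uncountable K] (d : ℕ)
    (C : ℕ → Set (Fin d → K))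
    (hcon : ∀ N, ZConstructible (C N))
    (hdec : ∀ N, C (N + 1) ⊆ C N)
    (hne : ∀ N, (C N).Nonempty) :
    (⋂ N, C N).Nonempty := by
  classical
  open MvPolynomial Ideal ZCP in
  have hanti : Antitone C := antitone_nat_of_succ_le hdec
  let J : ℕ →o Ideal (MvPolynomial (Fin d) K) :=
    ⟨fun N => vanishingIdeal K (C N), fun m n hmn => vanishingIdeal_anti_mono (hanti hmn)⟩
  obtain ⟨N1, hN1⟩ := monotone_stabilizes_iff_noetherian.mpr inferInstance J
  have hJtop : vanishingIdeal K (C N1) ≠ ⊤ := by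
    obtain ⟨x, hx⟩ := hne N1
    intro h
    have h1 : (1 : MvPolynomial (Fin d) K) ∈ vanishingIdeal K (C N1) := h ▸ Submodule.mem_top
    have h2 := mem_vanishingIdeal_iff.1 h1 x hx
    simp at h2
  obtain ⟨M, hM, hJM⟩ := Ideal.exists_le_maximal _ hJtop
  haveI := hM.isPrime
  obtain ⟨P, hP, _⟩ := Ideal.exists_minimalPrimes_le hJM
  haveI hPp : P.IsPrime := hP.1.1
  have hstep : ∀ M : ℕ, ∃ a, a ∉ P ∧
      ∀ x ∈ zeroLocus K P, eval x a ≠ 0 → x ∈ C (N1 + M) := by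
    intro M
    have hJeq : vanishingIdeal K (C (N1 + M)) = vanishingIdeal K (C N1) :=
      (hN1 (N1 + M) (Nat.le_add_right _ _)).symm
    refine key_step _ (hcon _) P ?_
    rw [hJeq]
    exact hP
  choose a haP ha using hstep
  obtain ⟨x, hx, hxa⟩ := exists_point_of_prime d ℕ P hPp a haP
  refine ⟨x, Set.mem_iInter.2 fun N => ?_⟩
  exact hanti (Nat.le_add_left N N1) (ha N x hx (hxa N))
end

section
/- Let K = \bar{Q} be the field of algebraic numbers, enumerated as α_0, α_1, α_2, …. Define the map G : K[[x]] → K[[x]] on a power series y(x) = Σ_{k≥0} y_k x^k by G(y(x)) = Σ_{l≥1} ((y_0 − α_{l−1}) y_l − 1) x^l. Then there is no power series y(x) ∈ K[[x]] with G(y(x)) = 0. -/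
/-- Let `K = ℚ̄` be the algebraic numbers, with an enumeration `α : ℕ → K`
(a surjection). The textile map `G` sending `y = Σ y_k x^k` to
`Σ_{l ≥ 1} ((y_0 - α_{l-1}) y_l - 1) x^l` has no zero: there is no power series
`y` with `(y_0 - α_{l-1}) y_l = 1` for all `l ≥ 1`. -/
theorem no_exact_solution_algebraic_numbers
    (α : ℕ → AlgebraicClosure ℚ) (hα : Function.Surjective α) :
    ¬ ∃ y : PowerSeries (AlgebraicClosure ℚ),
      ∀ l : ℕ, 1 ≤ l →
        (PowerSeries.coeff 0 y - α (l - 1)) *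
          PowerSeries.coeff l y - 1 = 0 := by
  rintro ⟨y, h⟩
  obtain ⟨l0, hl0⟩ := hα (PowerSeries.coeff 0 y)
  have := h (l0 + 1) (Nat.le_add_left 1 l0)
  simp [hl0] at this
end

section
/- Let K = \bar{Q} with enumeration α_0, α_1, …, and define G : K[[x]] → K[[x]] by G(Σ_{k≥0} y_k x^k) = Σ_{l≥1} ((y_0 − α_{l−1}) y_l − 1) x^l. For every integer N ≥ 1, the polynomial y_N(x) = α_N + Σ_{k=1}^{N} (1/(α_N − α_{k−1})) x^k satisfies G(y_N(x)) ≡ 0 modulo x^{N+1}. Hence G = 0 admits approximate solutions up to every degree, while (by the previous statement) it admits no exact solution. -/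
open PowerSeries

/-- Over `K = ℚ̄` with an injective enumeration `α`, the polynomial
`y_N(x) = α_N + Σ_{k=1}^N (α_N - α_{k-1})⁻¹ x^k` is an approximate solution of
`G = 0` modulo `x^{N+1}`, where `G(Σ y_k x^k) = Σ_{l≥1} ((y_0 - α_{l-1}) y_l - 1) x^l`;
hence `G = 0` has approximate solutions up to every degree, while (if `α` is also
surjective, i.e. an enumeration of all of `ℚ̄`) it has no exact solution. -/
theorem approx_solutions_but_no_exact
    (α : ℕ → AlgebraicClosure ℚ) (hinj : Function.Injective α) :
    (∀ N : ℕ, 1 ≤ N →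
      ∀ l : ℕ, 1 ≤ l → l ≤ N →
        (PowerSeries.coeff (R := AlgebraicClosure ℚ) 0
            (PowerSeries.mk fun k =>
              if k = 0 then α N
              else if k ≤ N then (α N - α (k - 1))⁻¹ else 0) - α (l - 1)) *
          PowerSeries.coeff (R := AlgebraicClosure ℚ) l
            (PowerSeries.mk fun k =>
              if k = 0 then α N
              else if k ≤ N then (α N - α (k - 1))⁻¹ else 0) - 1 = 0) ∧
    (Function.Surjective α →
      ¬ ∃ y : PowerSeries (AlgebraicClosure ℚ),
        ∀ l : ℕ, 1 ≤ l →
          (PowerSeries.coeff (R := AlgebraicClosure ℚ) 0 y - α (l - 1)) *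
            PowerSeries.coeff (R := AlgebraicClosure ℚ) l y - 1 = 0) := by
  constructor
  · intro N hN l hl hlN
    simp only [coeff_mk]
    have hne : l ≠ 0 := by omega
    have h1 : α N - α (l - 1) ≠ 0 := by
      intro h
      have : α N = α (l - 1) := by linear_combination h
      have := hinj this
      omega
    rw [if_neg hne, if_pos hlN, if_pos trivial]
    field_simp
    exact sub_self 1
  · intro hsurj ⟨y, hy⟩
    obtain ⟨n, hn⟩ := hsurj (PowerSeries.coeff (R := AlgebraicClosure ℚ) 0 y)
    have := hy (n + 1) (by omega)
    simp only [Nat.add_sub_cancel, hn] at this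
    simp at this
end

section
/- Let K be an uncountable algebraically closed field, x = (x_1,…,x_n), and let G : K[[x]]^m → K[[x]]^q be a textile map, i.e., each coefficient of G(y(x)) is a polynomial (over K) in the coefficients of y(x), and for each N there is an integer D_N ≥ N such that the coefficients of G(y(x)) of degree < N depend only on the coefficients of y(x) of degree < D_N. If for every l ∈ ℕ there exists y(x) ∈ K[[x]]^m with G(y(x)) ≡ 0 mod (x)^l, then there exists y(x) ∈ K[[x]]^m with G(y(x)) = 0. -/
/-- Total degree of a multi-exponent `β : Fin n →₀ ℕ`. -/
def expDeg {n : ℕ} (β : Fin n →₀ ℕ) : ℕ := β.sum fun _ e => e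

/-- The family of coefficients of a tuple of power series, as a point of the
space of coefficient variables `Fin m × (Fin n →₀ ℕ)`. -/
noncomputable def coeffFun {K : Type*} [Field K] {n m : ℕ}
    (y : Fin m → MvPowerSeries (Fin n) K) : Fin m × (Fin n →₀ ℕ) → K :=
  fun v => MvPowerSeries.coeff v.2 (y v.1)

/-- A field extension of an uncountable algebraically closed field, of countable
dimension, is trivial: the algebra map is surjective. -/
theorem algMap_surj_of_countable_rank.{u, v}
    (K : Type u) (L : Type v) [Field K] [IsAlgClosed K] [Uncountable K]
    [Field L] [Algebra K L] (h : Module.rank K L ≤ Cardinal.aleph0) :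
    Function.Surjective (algebraMap K L) := by
  haveI : Algebra.IsIntegral K L := by
    constructor
    intro x
    rw [← isAlgebraic_iff_isIntegral]
    by_contra hx
    have li := (Transcendental.linearIndependent_sub_inv (F := K) (E := L) hx)
    have hle := li.cardinal_lift_le_rank
    have h2 : Cardinal.lift.{v} (Cardinal.mk K) ≤ Cardinal.lift.{u} Cardinal.aleph0 :=
      hle.trans (Cardinal.lift_le.mpr h)
    rw [Cardinal.lift_aleph0, Cardinal.lift_le_aleph0] at h2
    exact absurd h2 (not_le.mpr (Cardinal.aleph0_lt_mk (α := K)))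
  exact IsAlgClosed.algebraMap_bijective_of_isIntegral.2

/-- Strong approximation for textile maps over an uncountable algebraically closed
field: a textile map `G : K[[x]]^m → K[[x]]^q` is encoded by its coefficient
polynomials `P j β` in the coefficient variables of `y`, with the finite-dependence
property (coefficients of `G(y)` of degree `< N` depend only on coefficients of `y`
of degree `< D N`). If `G = 0` has approximate solutions modulo `(x)^l` for every
`l`, then it has an exact solution. -/
theorem strong_approximation_textile
    (K : Type*) [Field K] [IsAlgClosed K] [Uncountable K]
    (n m q : ℕ)
    (P : Fin q → (Fin n →₀ ℕ) → MvPolynomial (Fin m × (Fin n →₀ ℕ)) K)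
    (D : ℕ → ℕ) (hD : ∀ N, N ≤ D N)
    (hdep : ∀ N : ℕ, ∀ j : Fin q, ∀ β : Fin n →₀ ℕ, expDeg β < N →
      ∀ v ∈ (P j β).vars, expDeg v.2 < D N)
    (happrox : ∀ l : ℕ, ∃ y : Fin m → MvPowerSeries (Fin n) K,
      ∀ j : Fin q, ∀ β : Fin n →₀ ℕ, expDeg β < l →
        MvPolynomial.eval (coeffFun y) (P j β) = 0) :
    ∃ y : Fin m → MvPowerSeries (Fin n) K,
      ∀ j : Fin q, ∀ β : Fin n →₀ ℕ,
        MvPolynomial.eval (coeffFun y) (P j β) = 0 := by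
  classical
  -- the ideal of equations up to level l
  let J : ℕ → Ideal (MvPolynomial (Fin m × (Fin n →₀ ℕ)) K) := fun l =>
    Ideal.span {p | ∃ j β, expDeg β < l ∧ P j β = p}
  have hJmono : Monotone J := by
    intro a b hab
    apply Ideal.span_mono
    rintro p ⟨j, β, hβ, rfl⟩
    exact ⟨j, β, hβ.trans_le hab, rfl⟩
  -- the full ideal is proper
  have hne : (⨆ l, J l) ≠ ⊤ := by
    intro htop
    have h1 : (1 : MvPolynomial (Fin m × (Fin n →₀ ℕ)) K) ∈ ⨆ l, J l :=
      htop ▸ Submodule.mem_top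
    obtain ⟨l, hl⟩ := (Submodule.mem_iSup_of_directed _ (hJmono.directed_le)).mp h1
    obtain ⟨y, hy⟩ := happrox l
    have hker : J l ≤ RingHom.ker (MvPolynomial.eval (coeffFun y)) := by
      rw [Ideal.span_le]
      rintro p ⟨j, β, hβ, rfl⟩
      simp only [SetLike.mem_coe, RingHom.mem_ker]
      exact hy j β hβ
    have := hker hl
    simp [RingHom.mem_ker] at this
  obtain ⟨M, hM, hle⟩ := Ideal.exists_le_maximal _ hne
  have hPM : ∀ (j : Fin q) (β : Fin n →₀ ℕ), P j β ∈ M := by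
    intro j β
    apply hle
    apply le_iSup J (expDeg β + 1)
    exact Ideal.subset_span ⟨j, β, Nat.lt_succ_self _, rfl⟩
  letI : Field (MvPolynomial (Fin m × (Fin n →₀ ℕ)) K ⧸ M) := Ideal.Quotient.field M
  -- count the rank
  have hrank : Module.rank K (MvPolynomial (Fin m × (Fin n →₀ ℕ)) K ⧸ M) ≤
      Cardinal.aleph0 := by
    have h1 : Module.rank K (MvPolynomial (Fin m × (Fin n →₀ ℕ)) K ⧸ M) ≤
        Module.rank K (MvPolynomial (Fin m × (Fin n →₀ ℕ)) K) :=
      (Ideal.Quotient.mkₐ K M).toLinearMap.rank_le_of_surjective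
        (Ideal.Quotient.mk_surjective)
    have h2 : Module.rank K (MvPolynomial (Fin m × (Fin n →₀ ℕ)) K) ≤
        Cardinal.aleph0 := by
      rw [← (MvPolynomial.basisMonomials (Fin m × (Fin n →₀ ℕ)) K).reindexRange.mk_eq_rank'']
      haveI : Countable (Set.range
          (MvPolynomial.basisMonomials (Fin m × (Fin n →₀ ℕ)) K)) :=
        (Set.countable_range _).to_subtype
      exact Cardinal.mk_le_aleph0
    exact h1.trans h2
  have hsurj := algMap_surj_of_countable_rank K _ hrank
  have hinj : Function.Injective
      (algebraMap K (MvPolynomial (Fin m × (Fin n →₀ ℕ)) K ⧸ M)) :=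
    (algebraMap K _).injective
  let e := AlgEquiv.ofBijective (Algebra.ofId K (MvPolynomial (Fin m × (Fin n →₀ ℕ)) K ⧸ M))
    ⟨hinj, hsurj⟩
  let φ : MvPolynomial (Fin m × (Fin n →₀ ℕ)) K →ₐ[K] K :=
    e.symm.toAlgHom.comp (Ideal.Quotient.mkₐ K M)
  -- assemble the power series solution
  refine ⟨fun i => fun β => φ (MvPolynomial.X (i, β)), ?_⟩
  intro j β
  have hc : coeffFun (fun i => (fun β => φ (MvPolynomial.X (i, β)) :
      MvPowerSeries (Fin n) K)) = fun v => φ (MvPolynomial.X v) := by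
    funext v; rfl
  rw [hc]
  have heval : MvPolynomial.eval (fun v => φ (MvPolynomial.X v)) (P j β) = φ (P j β) := by
    conv_rhs => rw [MvPolynomial.aeval_unique φ]
    rfl
  rw [heval]
  show e.symm (Ideal.Quotient.mkₐ K M (P j β)) = 0
  have : Ideal.Quotient.mkₐ K M (P j β) = 0 := by
    simpa [Ideal.Quotient.eq_zero_iff_mem] using hPM j β
  rw [this, map_zero]
end

section
/- Let K be an uncountable algebraically closed field and let G : K[[x]]^m → K[[x]]^q be a textile map. Then there exists l ∈ ℕ (depending on G) such that: if G = 0 admits an approximate solution up to degree l, i.e., some y(x) ∈ K[[x]]^m with G(y(x)) ≡ 0 mod (x)^l, then G = 0 admits an exact solution y(x) ∈ K[[x]]^m with G(y(x)) = 0. -/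
/-- Nullstellensatz for countably many variables over an uncountable
algebraically closed field: every proper ideal has a zero. -/
theorem exists_point_of_ne_top {K : Type u} [Field K] [IsAlgClosed K] [Uncountable K]
    {σ : Type} [Countable σ] (I : Ideal (MvPolynomial σ K)) (hI : I ≠ ⊤) :
    ∃ c : σ → K, ∀ f ∈ I, MvPolynomial.eval c f = 0 := by
  obtain ⟨M, hM, hIM⟩ := Ideal.exists_le_maximal I hI
  haveI := hM
  letI : Field (MvPolynomial σ K ⧸ M) := Ideal.Quotient.field M
  have hrank : Module.rank K (MvPolynomial σ K ⧸ M) ≤ Cardinal.aleph0 := by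
    refine le_trans (LinearMap.rank_le_of_surjective
      (Ideal.Quotient.mkₐ K M).toLinearMap (Ideal.Quotient.mk_surjective)) ?_
    rw [MvPolynomial.rank_eq_lift]
    simpa using (Cardinal.mk_le_aleph0 : Cardinal.mk (σ →₀ ℕ) ≤ Cardinal.aleph0)
  have halg : Algebra.IsAlgebraic K (MvPolynomial σ K ⧸ M) := by
    constructor
    intro x
    by_contra hx
    have h0 : Transcendental K x := hx
    have h1 := (Transcendental.linearIndependent_sub_inv h0).cardinal_lift_le_rank
    have h2 : Cardinal.aleph0 < Cardinal.mk K := Cardinal.aleph0_lt_mk (α := K)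
    have h3 : Cardinal.mk K ≤ Cardinal.aleph0 := by
      have := h1.trans (Cardinal.lift_le.mpr hrank)
      simpa using this
    exact absurd (h2.trans_le h3) (lt_irrefl _)
  haveI : Algebra.IsIntegral K (MvPolynomial σ K ⧸ M) := Algebra.IsAlgebraic.isIntegral
  have hsurj : Function.Surjective (algebraMap K (MvPolynomial σ K ⧸ M)) :=
    IsAlgClosed.algebraMap_bijective_of_isIntegral.2
  have hinj : Function.Injective (algebraMap K (MvPolynomial σ K ⧸ M)) :=
    (algebraMap K _).injective
  let e : K ≃ₐ[K] (MvPolynomial σ K ⧸ M) :=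
    AlgEquiv.ofBijective (Algebra.ofId K _) ⟨hinj, hsurj⟩
  let ψ : MvPolynomial σ K →ₐ[K] K :=
    (e.symm.toAlgHom).comp (Ideal.Quotient.mkₐ K M)
  refine ⟨fun s => ψ (MvPolynomial.X s), fun f hf => ?_⟩
  have hψ : ψ f = 0 := by
    have h0 : Ideal.Quotient.mk M f = 0 := (Ideal.Quotient.eq_zero_iff_mem).mpr (hIM hf)
    simp [ψ, Ideal.Quotient.mkₐ_eq_mk, h0]
  have heq : MvPolynomial.eval (fun s => ψ (MvPolynomial.X s)) f
      = MvPolynomial.aeval (R := K) (fun s => ψ (MvPolynomial.X s)) f :=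
    (DFunLike.congr_fun (MvPolynomial.coe_aeval_eq_eval _) f).symm
  rw [heq, show (fun s => ψ (MvPolynomial.X s)) = ψ ∘ MvPolynomial.X from rfl,
    ← MvPolynomial.aeval_unique ψ, hψ]


/-- Strong Approximation Theorem for Textile Maps (uncountable algebraically closed
field): there is an `l` (depending on `G`) such that if `G = 0` has an approximate
solution modulo `(x)^l` then it has an exact solution. The textile map
`G : K[[x]]^m → K[[x]]^q` is encoded by its coefficient polynomials `P j β`. -/
theorem strong_approximation_textile_bound
    (K : Type*) [Field K] [IsAlgClosed K] [Uncountable K]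
    (n m q : ℕ)
    (P : Fin q → (Fin n →₀ ℕ) → MvPolynomial (Fin m × (Fin n →₀ ℕ)) K)
    (D : ℕ → ℕ) (hD : ∀ N, N ≤ D N)
    (hdep : ∀ N : ℕ, ∀ j : Fin q, ∀ β : Fin n →₀ ℕ, expDeg β < N →
      ∀ v ∈ (P j β).vars, expDeg v.2 < D N) :
    ∃ l : ℕ,
      (∃ y : Fin m → MvPowerSeries (Fin n) K,
        ∀ j : Fin q, ∀ β : Fin n →₀ ℕ, expDeg β < l →
          MvPolynomial.eval (coeffFun y) (P j β) = 0) →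
      ∃ y : Fin m → MvPowerSeries (Fin n) K,
        ∀ j : Fin q, ∀ β : Fin n →₀ ℕ,
          MvPolynomial.eval (coeffFun y) (P j β) = 0 := by
  classical
  by_cases hall : ∀ l : ℕ, ∃ y : Fin m → MvPowerSeries (Fin n) K,
      ∀ j : Fin q, ∀ β : Fin n →₀ ℕ, expDeg β < l →
        MvPolynomial.eval (coeffFun y) (P j β) = 0
  · refine ⟨0, fun _ => ?_⟩
    have hI : Ideal.span (Set.range fun i : Fin q × (Fin n →₀ ℕ) => P i.1 i.2) ≠ ⊤ := by
      intro htop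
      have h1 : (1 : MvPolynomial (Fin m × (Fin n →₀ ℕ)) K) ∈
          Ideal.span (Set.range fun i : Fin q × (Fin n →₀ ℕ) => P i.1 i.2) :=
        htop ▸ Submodule.mem_top
      rw [Ideal.span, Finsupp.mem_span_range_iff_exists_finsupp] at h1
      obtain ⟨d, hd⟩ := h1
      set l : ℕ := (d.support.sup fun i => expDeg i.2) + 1 with hl
      obtain ⟨y, hy⟩ := hall l
      have h2 := congrArg (MvPolynomial.eval (coeffFun y)) hd
      rw [map_one, map_finsuppSum] at h2
      have h3 : (d.sum fun i a =>
          MvPolynomial.eval (coeffFun y) (a • P i.1 i.2)) = 0 := by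
        unfold Finsupp.sum
        apply Finset.sum_eq_zero
        intro i hi
        have hlt : expDeg i.2 < l := by
          have h4 : expDeg i.2 ≤ d.support.sup fun i => expDeg i.2 :=
            Finset.le_sup (f := fun i => expDeg i.2) hi
          rw [hl]
          exact Nat.lt_succ_of_le h4
        have h0 : MvPolynomial.eval (coeffFun y) (P i.1 i.2) = 0 := hy i.1 i.2 hlt
        show MvPolynomial.eval (coeffFun y) (d i • P i.1 i.2) = 0
        rw [smul_eq_mul, map_mul, h0, mul_zero]
      rw [h3] at h2
      exact one_ne_zero h2.symm
    obtain ⟨c, hc⟩ := exists_point_of_ne_top _ hI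
    refine ⟨fun i => show MvPowerSeries (Fin n) K from fun β => c (i, β),
      fun j β => ?_⟩
    have hcf : coeffFun (fun i => show MvPowerSeries (Fin n) K from
        fun β => c (i, β)) = c := by
      funext v
      exact MvPowerSeries.coeff_apply _ _
    rw [hcf]
    exact hc (P j β) (Ideal.subset_span ⟨(j, β), rfl⟩)
  · obtain ⟨l, hl⟩ := not_forall.mp hall
    exact ⟨l, fun h => (hl h).elim⟩
end

section
/- Let K be a countable field. Then there exists a textile map G : K[[x]] → K[[x]] in one variable x (with each coefficient of G(y(x)) a polynomial in finitely many coefficients of y(x)) such that G = 0 admits approximate solutions modulo (x)^l for every l ∈ ℕ but admits no exact solution. Hence the Strong Approximation Theorem for Textile Maps fails for every countable field. -/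
/-- Over any countably infinite field `K` the Strong Approximation Theorem for
Textile Maps fails: there is a textile map `G : K[[x]] → K[[x]]` in one variable,
encoded by its coefficient polynomials `P l` (polynomials in finitely many
coefficients `y_k` of `y`), which admits approximate solutions modulo `(x)^l` for
every `l` but admits no exact solution. (Infiniteness is needed: the enumeration
`α_0, α_1, …` must provide, for each `N`, an element distinct from `α_0, …, α_{N-1}`.) -/
theorem strong_approximation_fails_countable_field
    (K : Type*) [Field K] [Countable K] [Infinite K] :
    ∃ P : ℕ → MvPolynomial ℕ K,
      (∀ l : ℕ, ∃ y : PowerSeries K,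
        ∀ b : ℕ, b < l →
          MvPolynomial.eval (fun k => PowerSeries.coeff k y) (P b) = 0) ∧
      ¬ ∃ y : PowerSeries K,
        ∀ b : ℕ,
          MvPolynomial.eval (fun k => PowerSeries.coeff k y) (P b) = 0 := by
  obtain ⟨e⟩ : Nonempty (ℕ ≃ K) := nonempty_equiv_of_countable
  refine ⟨fun l => if l = 0 then 0 else
      (MvPolynomial.X 0 - MvPolynomial.C (e (l - 1))) * MvPolynomial.X l - 1, ?_, ?_⟩
  · intro l
    refine ⟨PowerSeries.mk (fun k => if k = 0 then e l else (e l - e (k - 1))⁻¹), ?_⟩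
    intro b hb
    rcases Nat.eq_zero_or_pos b with hb0 | hb0
    · simp [hb0]
    · have hb0' : b ≠ 0 := hb0.ne'
      have hne : e l - e (b - 1) ≠ 0 := by
        refine sub_ne_zero.2 fun h => ?_
        have := e.injective h
        omega
      simp only [hb0', if_false, map_sub, map_mul, map_one, MvPolynomial.eval_X,
        MvPolynomial.eval_C, PowerSeries.coeff_mk, if_pos rfl, if_neg hb0']
      field_simp
      simp
  · rintro ⟨y, hy⟩
    set m := e.symm (PowerSeries.coeff 0 y) with hm
    have h0 : PowerSeries.coeff 0 y = e m := (e.apply_symm_apply _).symm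
    have := hy (m + 1)
    simp only [Nat.add_sub_cancel, Nat.succ_ne_zero, if_false, map_sub, map_mul, map_one,
      MvPolynomial.eval_X, MvPolynomial.eval_C] at this
    rw [h0] at this
    simp at this
end
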